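/- arXiv:2008.02035 — 2 statements merged into one kernel-verified Lean document; each statement's English description precedes it below -/
import Mathlib

section
/- Series composition recurrence: Let the series-parallel digraph G_v be the series composition of G_x and G_y (target of G_x identified with origin of G_y). The restricted robust flow problem on G_v with supply s~_v and budget c~_v is feasible if and only if there exist budgets c~_x, c~_y with c~_v = c~_x + c~_y such that the restricted problem on G_x with supply s~_x = s~_v and budget c~_x is feasible and the restricted problem on G_y with supply s~_y = s~_x + beta and budget c~_y is feasible, where beta^lambda = sum over vertices w of G_x other than its origin of b^lambda(w). -/
open Finset

structure Net (V A : Type) where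
  src : A → V
  dst : A → V
  isFixed : A → Bool
  u : A → ℤ
  c : A → ℤ

variable {V A : Type} [Fintype V] [Fintype A] [DecidableEq V]

def excess (N : Net V A) (f : A → ℤ) (v : V) : ℤ :=
  ∑ a ∈ univ.filter (fun a => N.src a = v), f a -
    ∑ a ∈ univ.filter (fun a => N.dst a = v), f a

def cost (N : Net V A) (f : A → ℤ) : ℤ := ∑ a, N.c a * f a

/-- A vertex is incident to the (sub)graph if some arc starts or ends there. -/
def Incident (N : Net V A) (v : V) : Prop := ∃ a, N.src a = v ∨ N.dst a = v

instance (N : Net V A) (v : V) : Decidable (Incident N v) :=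
  inferInstanceAs (Decidable (∃ a, N.src a = v ∨ N.dst a = v))

/-- The `(st, ct)`-restricted robust minimum cost flow problem on a subgraph with
origin `o` and target `q` is feasible (demand label `0`): there are integral scenario
flows within capacities, agreeing on fixed arcs, with excess `st^λ` at the origin and
excess `b^λ(w)` at every other vertex of the subgraph except the target, whose
scenario costs exactly meet the budgets `ct^λ`. -/
def RestFeasible {Λ : Type} (N : Net V A) (o q : V) (b : Λ → V → ℤ)
    (st ct : Λ → ℤ) : Prop :=
  ∃ f : Λ → A → ℤ,
    (∀ lam a, 0 ≤ f lam a ∧ f lam a ≤ N.u a) ∧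
    (∀ lam lam' a, N.isFixed a = true → f lam a = f lam' a) ∧
    (∀ lam, excess N (f lam) o = st lam) ∧
    (∀ lam v, v ≠ o → v ≠ q → Incident N v → excess N (f lam) v = b lam v) ∧
    (∀ lam, cost N (f lam) = ct lam)

def combineNet {Ax Ay : Type} (Nx : Net V Ax) (Ny : Net V Ay) : Net V (Ax ⊕ Ay) where
  src := Sum.elim Nx.src Ny.src
  dst := Sum.elim Nx.dst Ny.dst
  isFixed := Sum.elim Nx.isFixed Ny.isFixed
  u := Sum.elim Nx.u Ny.u
  c := Sum.elim Nx.c Ny.c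

lemma sum_excess_eq_zero (N : Net V A) (f : A → ℤ) : ∑ v, excess N f v = 0 := by
  unfold excess
  rw [Finset.sum_sub_distrib, Finset.sum_fiberwise, Finset.sum_fiberwise, sub_self]

lemma excess_not_incident (N : Net V A) (f : A → ℤ) {v : V} (h : ¬ Incident N v) :
    excess N f v = 0 := by
  have h1 : univ.filter (fun a => N.src a = v) = ∅ :=
    Finset.filter_eq_empty_iff.mpr (fun a _ hh => h ⟨a, Or.inl hh⟩)
  have h2 : univ.filter (fun a => N.dst a = v) = ∅ :=
    Finset.filter_eq_empty_iff.mpr (fun a _ hh => h ⟨a, Or.inr hh⟩)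
  simp [excess, h1, h2]

lemma excess_combine {Ax Ay : Type} [Fintype Ax] [Fintype Ay] (Nx : Net V Ax) (Ny : Net V Ay)
    (fx : Ax → ℤ) (fy : Ay → ℤ) (v : V) :
    excess (combineNet Nx Ny) (Sum.elim fx fy) v = excess Nx fx v + excess Ny fy v := by
  simp only [excess, Finset.sum_filter]
  simp only [excess, combineNet, Finset.sum_filter, Fintype.sum_sum_type, Sum.elim_inl,
    Sum.elim_inr]
  exact (show ∀ a b c d : ℤ, (a + c) - (b + d) = (a - b) + (c - d) from fun _ _ _ _ => by ring) _ _ _ _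

lemma cost_combine {Ax Ay : Type} [Fintype Ax] [Fintype Ay] (Nx : Net V Ax) (Ny : Net V Ay)
    (fx : Ax → ℤ) (fy : Ay → ℤ) :
    cost (combineNet Nx Ny) (Sum.elim fx fy) = cost Nx fx + cost Ny fy := by
  simp [cost, combineNet, Fintype.sum_sum_type]

lemma incident_combine {Ax Ay : Type} [Fintype Ax] [Fintype Ay] (Nx : Net V Ax) (Ny : Net V Ay)
    (v : V) : Incident (combineNet Nx Ny) v ↔ Incident Nx v ∨ Incident Ny v := by
  constructor
  · rintro ⟨a | a, h⟩
    · exact Or.inl ⟨a, h⟩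
    · exact Or.inr ⟨a, h⟩
  · rintro (⟨a, h⟩ | ⟨a, h⟩)
    · exact ⟨Sum.inl a, h⟩
    · exact ⟨Sum.inr a, h⟩

lemma excess_target (N : Net V A) (o w : V) (how : o ≠ w) (f : A → ℤ) (b : V → ℤ) (s : ℤ)
    (ho : excess N f o = s)
    (hb : ∀ v, v ≠ o → v ≠ w → Incident N v → excess N f v = b v) :
    excess N f w
      = -(s + ∑ v ∈ univ.filter (fun v => v ≠ o ∧ v ≠ w ∧ Incident N v), b v) := by
  have h0 := sum_excess_eq_zero N f
  have hmemw : w ∈ univ.erase o := Finset.mem_erase.mpr ⟨how.symm, Finset.mem_univ w⟩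
  have h1 : ∑ v, excess N f v
      = excess N f o + (excess N f w + ∑ v ∈ (univ.erase o).erase w, excess N f v) := by
    rw [← Finset.add_sum_erase _ _ (Finset.mem_univ o), ← Finset.add_sum_erase _ _ hmemw]
  have hset : ((univ.erase o).erase w).filter (fun v => Incident N v)
      = univ.filter (fun v => v ≠ o ∧ v ≠ w ∧ Incident N v) := by
    ext v
    simp only [Finset.mem_filter, Finset.mem_erase, Finset.mem_univ, true_and, and_true]
    tauto
  have h2 : ∑ v ∈ (univ.erase o).erase w, excess N f v
      = ∑ v ∈ univ.filter (fun v => v ≠ o ∧ v ≠ w ∧ Incident N v), b v := by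
    rw [← Finset.sum_filter_add_sum_filter_not _ (fun v => Incident N v)]
    have hz : ∑ v ∈ ((univ.erase o).erase w).filter (fun v => ¬ Incident N v),
        excess N f v = 0 :=
      Finset.sum_eq_zero (fun v hv =>
        excess_not_incident N f (Finset.mem_filter.mp hv).2)
    rw [hz, add_zero, hset]
    refine Finset.sum_congr rfl (fun v hv => ?_)
    obtain ⟨h1', h2', h3'⟩ := (Finset.mem_filter.mp hv).2
    exact hb v h1' h2' h3'
  rw [h1, ho, h2] at h0
  linarith

/-- Lemma 6 of the paper, series composition recurrence: if `G_v` is the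
series composition of `G_x` (origin `o`, target `w`) and `G_y` (origin `w`, target `q`),
then the restricted problem on `G_v` with supplies `st` and budgets `ct` is feasible
iff the budget can be split as `ct = cx + cy` so that the restricted problem on `G_x`
with supplies `st` and budgets `cx` and the restricted problem on `G_y` with supplies
`st + β` and budgets `cy` are feasible, where `β^λ` is the sum of the balances
`b^λ` over the vertices of `G_x` other than its origin. -/
theorem dp_series_recurrence {Ax Ay Λ : Type} [Fintype Ax] [Fintype Ay]
    (Nx : Net V Ax) (Ny : Net V Ay) (o w q : V)
    (how : o ≠ w) (hwq : w ≠ q) (hoq : o ≠ q)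
    (hcut : ∀ v, Incident Nx v → Incident Ny v → v = w)
    (hoNy : ¬ Incident Ny o) (hqNx : ¬ Incident Nx q) (hwNy : Incident Ny w)
    (b : Λ → V → ℤ) (st ct : Λ → ℤ) (β : Λ → ℤ)
    (hβ : ∀ lam, β lam
      = ∑ v ∈ univ.filter (fun v => v ≠ o ∧ (Incident Nx v ∨ v = w)), b lam v) :
    RestFeasible (combineNet Nx Ny) o q b st ct ↔
      ∃ cx cy : Λ → ℤ,
        (∀ lam, ct lam = cx lam + cy lam) ∧
        RestFeasible Nx o w b st cx ∧
        RestFeasible Ny w q b (fun lam => st lam + β lam) cy := by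
  have hβ' : ∀ lam, β lam = b lam w
      + ∑ v ∈ univ.filter (fun v => v ≠ o ∧ v ≠ w ∧ Incident Nx v), b lam v := by
    intro lam
    rw [hβ lam]
    have hset : univ.filter (fun v => v ≠ o ∧ (Incident Nx v ∨ v = w))
        = insert w (univ.filter (fun v => v ≠ o ∧ v ≠ w ∧ Incident Nx v)) := by
      ext v
      simp only [Finset.mem_filter, Finset.mem_insert, Finset.mem_univ, true_and]
      constructor
      · rintro ⟨h1, h2⟩
        by_cases hv : v = w
        · exact Or.inl hv
        · exact Or.inr ⟨h1, hv, h2.resolve_right hv⟩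
      · rintro (hv | ⟨h1, h2, h3⟩)
        · exact ⟨hv ▸ Ne.symm how, Or.inr hv⟩
        · exact ⟨h1, Or.inl h3⟩
    rw [hset, Finset.sum_insert (by simp)]
  constructor
  · rintro ⟨f, hcap, hfix, ho, hv, hc⟩
    set fx : Λ → Ax → ℤ := fun lam a => f lam (Sum.inl a) with hfx
    set fy : Λ → Ay → ℤ := fun lam a => f lam (Sum.inr a) with hfy
    have hf : ∀ lam, f lam = Sum.elim (fx lam) (fy lam) := by
      intro lam; funext a; cases a <;> rfl
    have hsplit : ∀ lam v, excess (combineNet Nx Ny) (f lam) v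
        = excess Nx (fx lam) v + excess Ny (fy lam) v := by
      intro lam v; rw [hf lam]; exact excess_combine Nx Ny (fx lam) (fy lam) v
    have hox : ∀ lam, excess Nx (fx lam) o = st lam := by
      intro lam
      have h := ho lam
      rw [hsplit, excess_not_incident Ny _ hoNy] at h
      linarith
    have hbx : ∀ lam v, v ≠ o → v ≠ w → Incident Nx v → excess Nx (fx lam) v = b lam v := by
      intro lam v h1 h2 h3
      have hvq : v ≠ q := fun hh => hqNx (hh ▸ h3)
      have hny : ¬ Incident Ny v := fun hh => h2 (hcut v h3 hh)
      have h := hv lam v h1 hvq ((incident_combine Nx Ny v).mpr (Or.inl h3))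
      rw [hsplit, excess_not_incident Ny _ hny] at h
      linarith
    have hxw := fun lam =>
      excess_target Nx o w how (fx lam) (b lam) (st lam) (hox lam) (hbx lam)
    have hyw : ∀ lam, excess Ny (fy lam) w = st lam + β lam := by
      intro lam
      have hw := hv lam w (Ne.symm how) hwq ((incident_combine Nx Ny w).mpr (Or.inr hwNy))
      rw [hsplit, hxw lam] at hw
      rw [hβ' lam]
      linarith
    have hby : ∀ lam v, v ≠ w → v ≠ q → Incident Ny v → excess Ny (fy lam) v = b lam v := by
      intro lam v h1 h2 h3
      have hvo : v ≠ o := fun hh => hoNy (hh ▸ h3)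
      have hnx : ¬ Incident Nx v := fun hh => h1 (hcut v hh h3)
      have h := hv lam v hvo h2 ((incident_combine Nx Ny v).mpr (Or.inr h3))
      rw [hsplit, excess_not_incident Nx _ hnx] at h
      linarith
    refine ⟨fun lam => cost Nx (fx lam), fun lam => cost Ny (fy lam), ?_,
      ⟨fx, ?_, ?_, hox, hbx, fun lam => rfl⟩,
      ⟨fy, ?_, ?_, hyw, hby, fun lam => rfl⟩⟩
    · intro lam; rw [← hc lam, hf lam, cost_combine]
    · intro lam a; exact hcap lam (Sum.inl a)
    · intro lam lam' a hfa; exact hfix lam lam' (Sum.inl a) hfa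
    · intro lam a; exact hcap lam (Sum.inr a)
    · intro lam lam' a hfa; exact hfix lam lam' (Sum.inr a) hfa
  · rintro ⟨cx, cy, hsum, ⟨fx, hcapx, hfixx, hox, hbx, hcx⟩, ⟨fy, hcapy, hfixy, hoy, hby, hcy⟩⟩
    refine ⟨fun lam => Sum.elim (fx lam) (fy lam), ?_, ?_, ?_, ?_, ?_⟩
    · intro lam a
      cases a with
      | inl a => exact hcapx lam a
      | inr a => exact hcapy lam a
    · intro lam lam' a h
      cases a with
      | inl a => exact hfixx lam lam' a h
      | inr a => exact hfixy lam lam' a h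
    · intro lam
      rw [excess_combine, excess_not_incident Ny _ hoNy, hox lam, add_zero]
    · intro lam v h1 h2 hinc
      rw [excess_combine]
      by_cases hvw : v = w
      · subst hvw
        have hxw := excess_target Nx o v how (fx lam) (b lam) (st lam) (hox lam) (hbx lam)
        have hy := hoy lam
        simp only at hy
        have hb' := hβ' lam
        rw [hxw, hy, hb']
        ring
      · rcases (incident_combine Nx Ny v).mp hinc with h3 | h3
        · have hny : ¬ Incident Ny v := fun hh => hvw (hcut v h3 hh)
          rw [excess_not_incident Ny _ hny, hbx lam v h1 hvw h3, add_zero]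
        · have hnx : ¬ Incident Nx v := fun hh => hvw (hcut v hh h3)
          rw [excess_not_incident Nx _ hnx, hby lam v hvw h2 h3, zero_add]
    · intro lam
      rw [cost_combine, hcx lam, hcy lam, hsum lam]
end

section
/- For a two-scenario robust flow instance on a series-parallel digraph with unique source at the origin and unique sink at the target and demands d^1 <= d^2, there exists an optimal integral robust b-flow f = (f^1, f^2) whose cost is attained by the second (larger-demand) scenario: c(f) = max{c(f^1), c(f^2)} = c(f^2). -/
open Finset

/-- Syntax trees of series-parallel digraphs: a single arc (with a flag marking it as
a fixed arc, a capacity and a cost), or a series or parallel composition. -/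
inductive SPD : Type where
  | arc (isFixed : Bool) (u c : ℤ) : SPD
  | series (g₁ g₂ : SPD) : SPD
  | parallel (g₁ g₂ : SPD) : SPD

namespace SPD

/-- Interior vertices (all vertices except origin and target). -/
def Inner : SPD → Type
  | arc _ _ _ => Empty
  | series g₁ g₂ => (g₁.Inner ⊕ g₂.Inner) ⊕ Unit
  | parallel g₁ g₂ => g₁.Inner ⊕ g₂.Inner

/-- Vertices: interior vertices plus the origin (`Sum.inr false`) and the
target (`Sum.inr true`). -/
def Vert (g : SPD) : Type := g.Inner ⊕ Bool

def Arcs : SPD → Type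
  | arc _ _ _ => Unit
  | series g₁ g₂ => g₁.Arcs ⊕ g₂.Arcs
  | parallel g₁ g₂ => g₁.Arcs ⊕ g₂.Arcs

def origin (g : SPD) : g.Vert := Sum.inr false
def target (g : SPD) : g.Vert := Sum.inr true

def innerFintype : (g : SPD) → Fintype g.Inner
  | arc _ _ _ => inferInstanceAs (Fintype Empty)
  | series g₁ g₂ =>
      letI := g₁.innerFintype; letI := g₂.innerFintype
      inferInstanceAs (Fintype ((g₁.Inner ⊕ g₂.Inner) ⊕ Unit))
  | parallel g₁ g₂ =>
      letI := g₁.innerFintype; letI := g₂.innerFintype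
      inferInstanceAs (Fintype (g₁.Inner ⊕ g₂.Inner))

instance (g : SPD) : Fintype g.Inner := g.innerFintype

def innerDecEq : (g : SPD) → DecidableEq g.Inner
  | arc _ _ _ => inferInstanceAs (DecidableEq Empty)
  | series g₁ g₂ =>
      letI := g₁.innerDecEq; letI := g₂.innerDecEq
      inferInstanceAs (DecidableEq ((g₁.Inner ⊕ g₂.Inner) ⊕ Unit))
  | parallel g₁ g₂ =>
      letI := g₁.innerDecEq; letI := g₂.innerDecEq
      inferInstanceAs (DecidableEq (g₁.Inner ⊕ g₂.Inner))

instance (g : SPD) : DecidableEq g.Inner := g.innerDecEq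
instance (g : SPD) : Fintype g.Vert := inferInstanceAs (Fintype (g.Inner ⊕ Bool))
instance (g : SPD) : DecidableEq g.Vert := inferInstanceAs (DecidableEq (g.Inner ⊕ Bool))

def arcsFintype : (g : SPD) → Fintype g.Arcs
  | arc _ _ _ => inferInstanceAs (Fintype Unit)
  | series g₁ g₂ =>
      letI := g₁.arcsFintype; letI := g₂.arcsFintype
      inferInstanceAs (Fintype (g₁.Arcs ⊕ g₂.Arcs))
  | parallel g₁ g₂ =>
      letI := g₁.arcsFintype; letI := g₂.arcsFintype
      inferInstanceAs (Fintype (g₁.Arcs ⊕ g₂.Arcs))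

instance (g : SPD) : Fintype g.Arcs := g.arcsFintype

def arcsDecEq : (g : SPD) → DecidableEq g.Arcs
  | arc _ _ _ => inferInstanceAs (DecidableEq Unit)
  | series g₁ g₂ =>
      letI := g₁.arcsDecEq; letI := g₂.arcsDecEq
      inferInstanceAs (DecidableEq (g₁.Arcs ⊕ g₂.Arcs))
  | parallel g₁ g₂ =>
      letI := g₁.arcsDecEq; letI := g₂.arcsDecEq
      inferInstanceAs (DecidableEq (g₁.Arcs ⊕ g₂.Arcs))

instance (g : SPD) : DecidableEq g.Arcs := g.arcsDecEq

/-- Embedding of the vertices of the first factor into a series composition: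
the target of `g₁` becomes the merged middle vertex. -/
def vmapS₁ (g₁ g₂ : SPD) : g₁.Vert → (series g₁ g₂).Vert
  | Sum.inl x => Sum.inl (Sum.inl (Sum.inl x))
  | Sum.inr false => Sum.inr false
  | Sum.inr true => Sum.inl (Sum.inr ())

def vmapS₂ (g₁ g₂ : SPD) : g₂.Vert → (series g₁ g₂).Vert
  | Sum.inl x => Sum.inl (Sum.inl (Sum.inr x))
  | Sum.inr false => Sum.inl (Sum.inr ())
  | Sum.inr true => Sum.inr true

def vmapP₁ (g₁ g₂ : SPD) : g₁.Vert → (parallel g₁ g₂).Vert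
  | Sum.inl x => Sum.inl (Sum.inl x)
  | Sum.inr b => Sum.inr b

def vmapP₂ (g₁ g₂ : SPD) : g₂.Vert → (parallel g₁ g₂).Vert
  | Sum.inl x => Sum.inl (Sum.inr x)
  | Sum.inr b => Sum.inr b

def src : (g : SPD) → g.Arcs → g.Vert
  | arc _ _ _, _ => Sum.inr false
  | series g₁ g₂, Sum.inl a => vmapS₁ g₁ g₂ (g₁.src a)
  | series g₁ g₂, Sum.inr a => vmapS₂ g₁ g₂ (g₂.src a)
  | parallel g₁ g₂, Sum.inl a => vmapP₁ g₁ g₂ (g₁.src a)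
  | parallel g₁ g₂, Sum.inr a => vmapP₂ g₁ g₂ (g₂.src a)

def dst : (g : SPD) → g.Arcs → g.Vert
  | arc _ _ _, _ => Sum.inr true
  | series g₁ g₂, Sum.inl a => vmapS₁ g₁ g₂ (g₁.dst a)
  | series g₁ g₂, Sum.inr a => vmapS₂ g₁ g₂ (g₂.dst a)
  | parallel g₁ g₂, Sum.inl a => vmapP₁ g₁ g₂ (g₁.dst a)
  | parallel g₁ g₂, Sum.inr a => vmapP₂ g₁ g₂ (g₂.dst a)

def cap : (g : SPD) → g.Arcs → ℤ
  | arc _ u _, _ => u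
  | series g₁ _, Sum.inl a => g₁.cap a
  | series _ g₂, Sum.inr a => g₂.cap a
  | parallel g₁ _, Sum.inl a => g₁.cap a
  | parallel _ g₂, Sum.inr a => g₂.cap a

def cost : (g : SPD) → g.Arcs → ℤ
  | arc _ _ c, _ => c
  | series g₁ _, Sum.inl a => g₁.cost a
  | series _ g₂, Sum.inr a => g₂.cost a
  | parallel g₁ _, Sum.inl a => g₁.cost a
  | parallel _ g₂, Sum.inr a => g₂.cost a

def fixedArc : (g : SPD) → g.Arcs → Bool
  | arc b _ _, _ => b
  | series g₁ _, Sum.inl a => g₁.fixedArc a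
  | series _ g₂, Sum.inr a => g₂.fixedArc a
  | parallel g₁ _, Sum.inl a => g₁.fixedArc a
  | parallel _ g₂, Sum.inr a => g₂.fixedArc a

/-- Net outflow minus inflow of an integral flow at a vertex. -/
def excess (g : SPD) (f : g.Arcs → ℤ) (v : g.Vert) : ℤ :=
  ∑ a ∈ univ.filter (fun a => g.src a = v), f a -
    ∑ a ∈ univ.filter (fun a => g.dst a = v), f a

def IsFlow (g : SPD) (b : g.Vert → ℤ) (f : g.Arcs → ℤ) : Prop :=
  (∀ a, 0 ≤ f a ∧ f a ≤ g.cap a) ∧ ∀ v, g.excess f v = b v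

def flowCost (g : SPD) (f : g.Arcs → ℤ) : ℤ := ∑ a, g.cost a * f a

/-- Balances of a unique source (the origin) / unique sink (the target) instance
with demand `d`. -/
def bal (g : SPD) (d : ℤ) : g.Vert → ℤ :=
  fun v => if v = g.origin then d else if v = g.target then -d else 0

/-- A two-scenario integral robust `b`-flow with demands `d₁`, `d₂` from the origin
to the target: both scenario flows are feasible and they agree on all fixed arcs. -/
def IsRobust2 (g : SPD) (d₁ d₂ : ℤ) (f₁ f₂ : g.Arcs → ℤ) : Prop :=
  g.IsFlow (g.bal d₁) f₁ ∧ g.IsFlow (g.bal d₂) f₂ ∧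
    ∀ a, g.fixedArc a = true → f₁ a = f₂ a

/-- Cost of a two-scenario robust flow: the maximum scenario cost. -/
def rcost (g : SPD) (f₁ f₂ : g.Arcs → ℤ) : ℤ := max (g.flowCost f₁) (g.flowCost f₂)

/-- Optimality: minimum cost among all integral robust flows for the same demands. -/
def Optimal (g : SPD) (d₁ d₂ : ℤ) (f₁ f₂ : g.Arcs → ℤ) : Prop :=
  g.IsRobust2 d₁ d₂ f₁ f₂ ∧
    ∀ h₁ h₂, g.IsRobust2 d₁ d₂ h₁ h₂ → g.rcost f₁ f₂ ≤ g.rcost h₁ h₂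

/-- Nonnegative capacities and costs. -/
def nonnegData (g : SPD) : Prop := ∀ a, 0 ≤ g.cap a ∧ 0 ≤ g.cost a

attribute [reducible] Vert Arcs innerFintype innerDecEq arcsFintype arcsDecEq
attribute [instance] instFintypeVert instDecidableEqVert instFintypeArcs instDecidableEqArcs

/-! ### Auxiliary lemmas -/

lemma excess_ite (g : SPD) (f : g.Arcs → ℤ) (v : g.Vert) :
    g.excess f v = (∑ a, if g.src a = v then f a else 0) -
      ∑ a, if g.dst a = v then f a else 0 := by
  simp [excess, Finset.sum_filter]

lemma vert_eq (g : SPD) (a b : g.Vert) :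
    (a = b) ↔ (show g.Inner ⊕ Bool from a) = (show g.Inner ⊕ Bool from b) := Iff.rfl

lemma innerS_eq (g₁ g₂ : SPD) (a b : (series g₁ g₂).Inner) :
    (a = b) ↔ (show (g₁.Inner ⊕ g₂.Inner) ⊕ Unit from a) =
      (show (g₁.Inner ⊕ g₂.Inner) ⊕ Unit from b) := Iff.rfl

lemma innerP_eq (g₁ g₂ : SPD) (a b : (parallel g₁ g₂).Inner) :
    (a = b) ↔ (show g₁.Inner ⊕ g₂.Inner from a) =
      (show g₁.Inner ⊕ g₂.Inner from b) := Iff.rfl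

@[simp] lemma inr_true_ne_inr_false {α : Type*} :
    (Sum.inr true : α ⊕ Bool) ≠ Sum.inr false := fun h => Bool.noConfusion (Sum.inr.inj h)

@[simp] lemma inr_false_ne_inr_true {α : Type*} :
    (Sum.inr false : α ⊕ Bool) ≠ Sum.inr true := fun h => Bool.noConfusion (Sum.inr.inj h)

@[simp] lemma bal_inl (g : SPD) (d : ℤ) (x : g.Inner) : g.bal d (Sum.inl x) = 0 := by
  simp [bal, origin, target]

@[simp] lemma bal_false (g : SPD) (d : ℤ) : g.bal d (Sum.inr false) = d := by
  simp [bal, origin, target]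

@[simp] lemma bal_true (g : SPD) (d : ℤ) : g.bal d (Sum.inr true) = -d := by
  simp [bal, origin, target]

lemma sum_vert (g : SPD) (F : g.Vert → ℤ) :
    ∑ v, F v = (∑ x, F (Sum.inl x)) + (F (Sum.inr false) + F (Sum.inr true)) := by
  rw [show (∑ v, F v) = (∑ x, F (Sum.inl x)) + ∑ b : Bool, F (Sum.inr b) from Fintype.sum_sum_type F]
  simp [Fintype.sum_bool]
  ring

lemma sum_excess (g : SPD) (f : g.Arcs → ℤ) : ∑ v, g.excess f v = 0 := by
  have key : ∀ h : g.Arcs → g.Vert, (∑ v, ∑ a, if h a = v then f a else 0) = ∑ a, f a := by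
    intro h
    rw [Finset.sum_comm]
    simp
  simp only [excess_ite, Finset.sum_sub_distrib, key, sub_self]

lemma dst_ne_origin : ∀ (g : SPD) (a : g.Arcs), g.dst a ≠ Sum.inr false := by
  intro g
  induction g with
  | arc b u c => intro a; simp [dst]
  | series g₁ g₂ ih₁ ih₂ =>
    rintro (a | a) h
    · rcases h₁ : g₁.dst a with x | (_ | _) <;> simp [dst, h₁, vmapS₁] at h
      exact ih₁ a h₁
    · rcases h₂ : g₂.dst a with x | (_ | _) <;> simp [dst, h₂, vmapS₂] at h
  | parallel g₁ g₂ ih₁ ih₂ =>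
    rintro (a | a) h
    · rcases h₁ : g₁.dst a with x | (_ | _) <;> simp [dst, h₁, vmapP₁] at h
      exact ih₁ a h₁
    · rcases h₂ : g₂.dst a with x | (_ | _) <;> simp [dst, h₂, vmapP₂] at h
      exact ih₂ a h₂

lemma demand_nonneg (g : SPD) (d : ℤ) (f : g.Arcs → ℤ)
    (hf : g.IsFlow (g.bal d) f) : 0 ≤ d := by
  have h := hf.2 (Sum.inr false)
  rw [excess] at h
  have h2 : (Finset.univ.filter fun a => g.dst a = (Sum.inr false : g.Vert)) = ∅ := by
    apply Finset.filter_eq_empty_iff.2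
    intro a _
    exact dst_ne_origin g a
  rw [h2] at h
  simp only [Finset.sum_empty, sub_zero, bal_false] at h
  rw [← h]
  exact Finset.sum_nonneg fun a _ => (hf.1 a).1

lemma isFlow_of (g : SPD) (d : ℤ) (f : g.Arcs → ℤ)
    (hc : ∀ a, 0 ≤ f a ∧ f a ≤ g.cap a)
    (hi : ∀ x : g.Inner, g.excess f (Sum.inl x) = 0)
    (ho : g.excess f (Sum.inr false) = d) : g.IsFlow (g.bal d) f := by
  refine ⟨hc, ?_⟩
  have hsum := sum_excess g f
  rw [sum_vert] at hsum
  simp only [hi, Finset.sum_const_zero, ho, zero_add] at hsum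
  have ht : g.excess f (Sum.inr true) = -d := by linarith
  rintro (x | (_ | _))
  · simpa using hi x
  · simpa using ho
  · simpa using ht

/-! ### Arc graphs -/

lemma isFlow_arc_iff (b : Bool) (u c d : ℤ) (f : (arc b u c).Arcs → ℤ) :
    (arc b u c).IsFlow ((arc b u c).bal d) f ↔ (0 ≤ f () ∧ f () ≤ u) ∧ f () = d := by
  have hval : ∀ v : (arc b u c).Vert, (arc b u c).excess f v =
      (if (Sum.inr false : (arc b u c).Vert) = v then f () else 0) -
        (if (Sum.inr true : (arc b u c).Vert) = v then f () else 0) := by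
    intro v
    rw [excess_ite]
    rw [show (∑ a ∈ @univ _ (instFintypeArcs (arc b u c)), if (arc b u c).src a = v then f a else 0)
        = ∑ a : Unit, if (arc b u c).src a = v then f a else 0 from rfl]
    rw [show (∑ a ∈ @univ _ (instFintypeArcs (arc b u c)), if (arc b u c).dst a = v then f a else 0)
        = ∑ a : Unit, if (arc b u c).dst a = v then f a else 0 from rfl]
    simp [src, dst]
    rfl
  constructor
  · rintro ⟨hcap, he⟩
    refine ⟨⟨(hcap ()).1, ?_⟩, ?_⟩
    · simpa [cap] using (hcap ()).2
    · have := he (Sum.inr false)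
      rw [hval] at this
      simpa using this
  · rintro ⟨⟨h0, h1⟩, h2⟩
    constructor
    · intro a; exact ⟨h0, h1⟩
    · rintro (x | (_ | _))
      · exact x.elim
      · rw [hval]; simpa using h2
      · rw [hval]; simpa using h2

/-! ### Series decomposition -/

section seriesLemmas

variable (g₁ g₂ : SPD)

lemma sum_arcs_series (F : (series g₁ g₂).Arcs → ℤ) :
    ∑ a ∈ @univ _ (instFintypeArcs (series g₁ g₂)), F a =
      (∑ a, F (Sum.inl a)) + ∑ a, F (Sum.inr a) := by
  exact Fintype.sum_sum_type F

lemma sum_arcs_parallel (F : (parallel g₁ g₂).Arcs → ℤ) :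
    ∑ a ∈ @univ _ (instFintypeArcs (parallel g₁ g₂)), F a =
      (∑ a, F (Sum.inl a)) + ∑ a, F (Sum.inr a) := by
  exact Fintype.sum_sum_type F

@[simp] lemma vS_ll (x y : g₁.Inner ⊕ g₂.Inner) :
    @Eq (series g₁ g₂).Vert (Sum.inl (Sum.inl x)) (Sum.inl (Sum.inl y)) ↔ x = y :=
  ⟨fun h => Sum.inl.inj (Sum.inl.inj h), fun h => h ▸ rfl⟩

@[simp] lemma vS_lm (x : g₁.Inner ⊕ g₂.Inner) (u : Unit) :
    ¬ @Eq (series g₁ g₂).Vert (Sum.inl (Sum.inl x)) (Sum.inl (Sum.inr u)) :=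
  fun h => Sum.inl_ne_inr (Sum.inl.inj h)

@[simp] lemma vS_ml (x : g₁.Inner ⊕ g₂.Inner) (u : Unit) :
    ¬ @Eq (series g₁ g₂).Vert (Sum.inl (Sum.inr u)) (Sum.inl (Sum.inl x)) :=
  fun h => Sum.inr_ne_inl (Sum.inl.inj h)

@[simp] lemma vS_mm (u v : Unit) :
    @Eq (series g₁ g₂).Vert (Sum.inl (Sum.inr u)) (Sum.inl (Sum.inr v)) ↔ True :=
  ⟨fun _ => trivial, fun _ => rfl⟩

@[simp] lemma vP_ll (x y : g₁.Inner) :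
    @Eq (parallel g₁ g₂).Vert (Sum.inl (Sum.inl x)) (Sum.inl (Sum.inl y)) ↔ x = y :=
  ⟨fun h => Sum.inl.inj (Sum.inl.inj h), fun h => h ▸ rfl⟩

@[simp] lemma vP_lr (x : g₁.Inner) (y : g₂.Inner) :
    ¬ @Eq (parallel g₁ g₂).Vert (Sum.inl (Sum.inl x)) (Sum.inl (Sum.inr y)) :=
  fun h => Sum.inl_ne_inr (Sum.inl.inj h)

@[simp] lemma vP_rl (x : g₁.Inner) (y : g₂.Inner) :
    ¬ @Eq (parallel g₁ g₂).Vert (Sum.inl (Sum.inr y)) (Sum.inl (Sum.inl x)) :=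
  fun h => Sum.inr_ne_inl (Sum.inl.inj h)

@[simp] lemma vP_rr (x y : g₂.Inner) :
    @Eq (parallel g₁ g₂).Vert (Sum.inl (Sum.inr x)) (Sum.inl (Sum.inr y)) ↔ x = y :=
  ⟨fun h => Sum.inr.inj (Sum.inl.inj h), fun h => h ▸ rfl⟩

@[simp] lemma bal_S (d : ℤ) (x : (g₁.Inner ⊕ g₂.Inner) ⊕ Unit) :
    (series g₁ g₂).bal d (Sum.inl x) = 0 := bal_inl (series g₁ g₂) d x

@[simp] lemma bal_P (d : ℤ) (x : g₁.Inner ⊕ g₂.Inner) :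
    (parallel g₁ g₂).bal d (Sum.inl x) = 0 := bal_inl (parallel g₁ g₂) d x

@[simp] lemma vmapS₁_eq_a (u : g₁.Vert) (x : g₁.Inner) :
    vmapS₁ g₁ g₂ u = @Sum.inl (series g₁ g₂).Inner Bool (Sum.inl (Sum.inl x)) ↔ u = Sum.inl x := by
  rcases u with y | (_ | _) <;> simp [vmapS₁]

@[simp] lemma vmapS₁_eq_b (u : g₁.Vert) (y : g₂.Inner) :
    ¬ (vmapS₁ g₁ g₂ u = @Sum.inl (series g₁ g₂).Inner Bool (Sum.inl (Sum.inr y))) := by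
  rcases u with z | (_ | _) <;> simp [vmapS₁]

@[simp] lemma vmapS₁_eq_m (u : g₁.Vert) :
    vmapS₁ g₁ g₂ u = @Sum.inl (series g₁ g₂).Inner Bool (Sum.inr ()) ↔ u = Sum.inr true := by
  rcases u with y | (_ | _) <;> simp [vmapS₁]

@[simp] lemma vmapS₁_eq_o (u : g₁.Vert) :
    vmapS₁ g₁ g₂ u = Sum.inr false ↔ u = Sum.inr false := by
  rcases u with y | (_ | _) <;> simp [vmapS₁]

@[simp] lemma vmapS₁_eq_t (u : g₁.Vert) :
    ¬ (vmapS₁ g₁ g₂ u = Sum.inr true) := by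
  rcases u with y | (_ | _) <;> simp [vmapS₁]

@[simp] lemma vmapS₂_eq_a (u : g₂.Vert) (x : g₁.Inner) :
    ¬ (vmapS₂ g₁ g₂ u = @Sum.inl (series g₁ g₂).Inner Bool (Sum.inl (Sum.inl x))) := by
  rcases u with y | (_ | _) <;> simp [vmapS₂]

@[simp] lemma vmapS₂_eq_b (u : g₂.Vert) (y : g₂.Inner) :
    vmapS₂ g₁ g₂ u = @Sum.inl (series g₁ g₂).Inner Bool (Sum.inl (Sum.inr y)) ↔ u = Sum.inl y := by
  rcases u with z | (_ | _) <;> simp [vmapS₂]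

@[simp] lemma vmapS₂_eq_m (u : g₂.Vert) :
    vmapS₂ g₁ g₂ u = @Sum.inl (series g₁ g₂).Inner Bool (Sum.inr ()) ↔ u = Sum.inr false := by
  rcases u with y | (_ | _) <;> simp [vmapS₂]

@[simp] lemma vmapS₂_eq_o (u : g₂.Vert) :
    ¬ (vmapS₂ g₁ g₂ u = Sum.inr false) := by
  rcases u with y | (_ | _) <;> simp [vmapS₂]

@[simp] lemma vmapS₂_eq_t (u : g₂.Vert) :
    vmapS₂ g₁ g₂ u = Sum.inr true ↔ u = Sum.inr true := by
  rcases u with y | (_ | _) <;> simp [vmapS₂]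

variable (f : (series g₁ g₂).Arcs → ℤ)

lemma exS_a (x : g₁.Inner) :
    (series g₁ g₂).excess f (Sum.inl (Sum.inl (Sum.inl x))) =
      g₁.excess (fun a => f (Sum.inl a)) (Sum.inl x) := by
  rw [excess_ite, excess_ite, sum_arcs_series, sum_arcs_series]
  simp only [src, dst, vmapS₁_eq_a, vmapS₂_eq_a]
  simp

lemma exS_b (y : g₂.Inner) :
    (series g₁ g₂).excess f (Sum.inl (Sum.inl (Sum.inr y))) =
      g₂.excess (fun a => f (Sum.inr a)) (Sum.inl y) := by
  rw [excess_ite, excess_ite, sum_arcs_series, sum_arcs_series]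
  simp only [src, dst, vmapS₁_eq_b, vmapS₂_eq_b]
  simp

lemma exS_m :
    (series g₁ g₂).excess f (Sum.inl (Sum.inr ())) =
      g₁.excess (fun a => f (Sum.inl a)) (Sum.inr true) +
        g₂.excess (fun a => f (Sum.inr a)) (Sum.inr false) := by
  rw [excess_ite, excess_ite, excess_ite, sum_arcs_series, sum_arcs_series]
  simp only [src, dst, vmapS₁_eq_m, vmapS₂_eq_m]
  ring

lemma exS_o :
    (series g₁ g₂).excess f (Sum.inr false) =
      g₁.excess (fun a => f (Sum.inl a)) (Sum.inr false) := by
  rw [excess_ite, excess_ite, sum_arcs_series, sum_arcs_series]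
  simp only [src, dst, vmapS₁_eq_o, vmapS₂_eq_o]
  simp

lemma exS_t :
    (series g₁ g₂).excess f (Sum.inr true) =
      g₂.excess (fun a => f (Sum.inr a)) (Sum.inr true) := by
  rw [excess_ite, excess_ite, sum_arcs_series, sum_arcs_series]
  simp only [src, dst, vmapS₁_eq_t, vmapS₂_eq_t]
  simp

lemma isFlow_series_iff (d : ℤ) :
    (series g₁ g₂).IsFlow ((series g₁ g₂).bal d) f ↔
      g₁.IsFlow (g₁.bal d) (fun a => f (Sum.inl a)) ∧
        g₂.IsFlow (g₂.bal d) (fun a => f (Sum.inr a)) := by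
  constructor
  · rintro ⟨hc, he⟩
    have h1 : g₁.IsFlow (g₁.bal d) (fun a => f (Sum.inl a)) := by
      apply isFlow_of
      · intro a; exact hc (Sum.inl a)
      · intro x; rw [← exS_a]; simpa using he (Sum.inl (Sum.inl (Sum.inl x)))
      · rw [← exS_o]; simpa using he (Sum.inr false)
    refine ⟨h1, ?_⟩
    apply isFlow_of
    · intro a; exact hc (Sum.inr a)
    · intro y; rw [← exS_b]; simpa using he (Sum.inl (Sum.inl (Sum.inr y)))
    · have hm := he (Sum.inl (Sum.inr ()))
      rw [exS_m] at hm
      have h1t := h1.2 (Sum.inr true)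
      simp only [bal_inl, bal_S, bal_true] at hm h1t
      linarith
  · rintro ⟨⟨hc₁, he₁⟩, ⟨hc₂, he₂⟩⟩
    constructor
    · rintro (a | a)
      · exact hc₁ a
      · exact hc₂ a
    · rintro (((x | y) | u) | (_ | _))
      · rw [exS_a]; simpa using he₁ (Sum.inl x)
      · rw [exS_b]; simpa using he₂ (Sum.inl y)
      · cases u
        rw [exS_m]
        have := he₁ (Sum.inr true); have := he₂ (Sum.inr false)
        simp_all
      · rw [exS_o]; simpa using he₁ (Sum.inr false)
      · rw [exS_t]; simpa using he₂ (Sum.inr true)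

end seriesLemmas

/-! ### Parallel decomposition -/

section parallelLemmas

variable (g₁ g₂ : SPD)

@[simp] lemma vmapP₁_eq_a (u : g₁.Vert) (x : g₁.Inner) :
    vmapP₁ g₁ g₂ u = @Sum.inl (parallel g₁ g₂).Inner Bool (Sum.inl x) ↔ u = Sum.inl x := by
  rcases u with y | b <;> simp [vmapP₁]

@[simp] lemma vmapP₁_eq_b (u : g₁.Vert) (y : g₂.Inner) :
    ¬ (vmapP₁ g₁ g₂ u = @Sum.inl (parallel g₁ g₂).Inner Bool (Sum.inr y)) := by
  rcases u with z | b <;> simp [vmapP₁]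

@[simp] lemma vmapP₁_eq_r (u : g₁.Vert) (b : Bool) :
    vmapP₁ g₁ g₂ u = Sum.inr b ↔ u = Sum.inr b := by
  rcases u with y | b' <;> simp [vmapP₁]

@[simp] lemma vmapP₂_eq_a (u : g₂.Vert) (x : g₁.Inner) :
    ¬ (vmapP₂ g₁ g₂ u = @Sum.inl (parallel g₁ g₂).Inner Bool (Sum.inl x)) := by
  rcases u with y | b <;> simp [vmapP₂]

@[simp] lemma vmapP₂_eq_b (u : g₂.Vert) (y : g₂.Inner) :
    vmapP₂ g₁ g₂ u = @Sum.inl (parallel g₁ g₂).Inner Bool (Sum.inr y) ↔ u = Sum.inl y := by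
  rcases u with z | b <;> simp [vmapP₂]

@[simp] lemma vmapP₂_eq_r (u : g₂.Vert) (b : Bool) :
    vmapP₂ g₁ g₂ u = Sum.inr b ↔ u = Sum.inr b := by
  rcases u with y | b' <;> simp [vmapP₂]

variable (f : (parallel g₁ g₂).Arcs → ℤ)

lemma exP_a (x : g₁.Inner) :
    (parallel g₁ g₂).excess f (Sum.inl (Sum.inl x)) =
      g₁.excess (fun a => f (Sum.inl a)) (Sum.inl x) := by
  rw [excess_ite, excess_ite, sum_arcs_parallel, sum_arcs_parallel]
  simp only [src, dst, vmapP₁_eq_a, vmapP₂_eq_a]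
  simp

lemma exP_b (y : g₂.Inner) :
    (parallel g₁ g₂).excess f (Sum.inl (Sum.inr y)) =
      g₂.excess (fun a => f (Sum.inr a)) (Sum.inl y) := by
  rw [excess_ite, excess_ite, sum_arcs_parallel, sum_arcs_parallel]
  simp only [src, dst, vmapP₁_eq_b, vmapP₂_eq_b]
  simp

lemma exP_r (b : Bool) :
    (parallel g₁ g₂).excess f (Sum.inr b) =
      g₁.excess (fun a => f (Sum.inl a)) (Sum.inr b) +
        g₂.excess (fun a => f (Sum.inr a)) (Sum.inr b) := by
  rw [excess_ite, excess_ite, excess_ite, sum_arcs_parallel, sum_arcs_parallel]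
  simp only [src, dst, vmapP₁_eq_r, vmapP₂_eq_r]
  ring

lemma isFlow_parallel_parts (d : ℤ)
    (h : (parallel g₁ g₂).IsFlow ((parallel g₁ g₂).bal d) f) :
    ∃ s t, s + t = d ∧ g₁.IsFlow (g₁.bal s) (fun a => f (Sum.inl a)) ∧
      g₂.IsFlow (g₂.bal t) (fun a => f (Sum.inr a)) := by
  obtain ⟨hc, he⟩ := h
  refine ⟨g₁.excess (fun a => f (Sum.inl a)) (Sum.inr false),
    g₂.excess (fun a => f (Sum.inr a)) (Sum.inr false), ?_, ?_, ?_⟩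
  · have := he (Sum.inr false)
    rw [exP_r] at this
    simpa using this
  · apply isFlow_of
    · intro a; exact hc (Sum.inl a)
    · intro x; rw [← exP_a]; simpa using he (Sum.inl (Sum.inl x))
    · rfl
  · apply isFlow_of
    · intro a; exact hc (Sum.inr a)
    · intro y; rw [← exP_b]; simpa using he (Sum.inl (Sum.inr y))
    · rfl

lemma isFlow_parallel_mk (s t : ℤ) (k₁ : g₁.Arcs → ℤ) (k₂ : g₂.Arcs → ℤ)
    (h₁ : g₁.IsFlow (g₁.bal s) k₁) (h₂ : g₂.IsFlow (g₂.bal t) k₂) :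
    (parallel g₁ g₂).IsFlow ((parallel g₁ g₂).bal (s + t)) (Sum.elim k₁ k₂) := by
  constructor
  · rintro (a | a)
    · exact h₁.1 a
    · exact h₂.1 a
  · rintro ((x | y) | (_ | _))
    · rw [exP_a]; simpa using h₁.2 (Sum.inl x)
    · rw [exP_b]; simpa using h₂.2 (Sum.inl y)
    · rw [exP_r]
      have ha := h₁.2 (Sum.inr false); have hb := h₂.2 (Sum.inr false)
      simp_all
    · rw [exP_r]
      have ha := h₁.2 (Sum.inr true); have hb := h₂.2 (Sum.inr true)
      simp_all
      ring

end parallelLemmas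

/-! ### Main structural lemmas -/

lemma split_interval (a₀ a₁ b₀ b₁ d : ℤ) (h₀ : min (a₀ + b₀) (a₁ + b₁) ≤ d)
    (h₁ : d ≤ max (a₀ + b₀) (a₁ + b₁)) :
    ∃ x y, x + y = d ∧ min a₀ a₁ ≤ x ∧ x ≤ max a₀ a₁ ∧ min b₀ b₁ ≤ y ∧ y ≤ max b₀ b₁ := by
  refine ⟨max (min a₀ a₁) (d - max b₀ b₁), d - max (min a₀ a₁) (d - max b₀ b₁), ?_⟩
  omega

/-- Demands of feasible flows with prescribed values on the fixed arcs form an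
integer interval. -/
lemma exists_flow_between : ∀ (g : SPD) (e₀ e₁ d : ℤ) (h₀ h₁ : g.Arcs → ℤ),
    g.IsFlow (g.bal e₀) h₀ → g.IsFlow (g.bal e₁) h₁ →
    (∀ a, g.fixedArc a = true → h₀ a = h₁ a) →
    min e₀ e₁ ≤ d → d ≤ max e₀ e₁ →
    ∃ h, g.IsFlow (g.bal d) h ∧ ∀ a, g.fixedArc a = true → h a = h₀ a := by
  intro g
  induction g with
  | arc b u c =>
    intro e₀ e₁ d h₀ h₁ H₀ H₁ hfix hl hr
    rw [isFlow_arc_iff] at H₀ H₁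
    obtain ⟨⟨h00, h01⟩, h02⟩ := H₀
    obtain ⟨⟨h10, h11⟩, h12⟩ := H₁
    cases b with
    | true =>
      have heq : h₀ () = h₁ () := hfix () rfl
      refine ⟨h₀, ?_, fun a _ => rfl⟩
      rw [isFlow_arc_iff]
      exact ⟨⟨h00, h01⟩, by omega⟩
    | false =>
      refine ⟨fun _ => d, ?_, fun a ha => by simp [fixedArc] at ha⟩
      rw [isFlow_arc_iff]
      exact ⟨⟨by omega, by omega⟩, rfl⟩
  | series g₁ g₂ ih₁ ih₂ =>
    intro e₀ e₁ d h₀ h₁ H₀ H₁ hfix hl hr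
    rw [isFlow_series_iff] at H₀ H₁
    obtain ⟨kL, hkL, hkLfix⟩ := ih₁ e₀ e₁ d _ _ H₀.1 H₁.1
      (fun a ha => hfix (Sum.inl a) ha) hl hr
    obtain ⟨kR, hkR, hkRfix⟩ := ih₂ e₀ e₁ d _ _ H₀.2 H₁.2
      (fun a ha => hfix (Sum.inr a) ha) hl hr
    refine ⟨Sum.elim kL kR, ?_, ?_⟩
    · rw [isFlow_series_iff]
      exact ⟨hkL, hkR⟩
    · rintro (a | a) ha
      · exact hkLfix a ha
      · exact hkRfix a ha
  | parallel g₁ g₂ ih₁ ih₂ =>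
    intro e₀ e₁ d h₀ h₁ H₀ H₁ hfix hl hr
    obtain ⟨s₀, t₀, hst₀, H₀L, H₀R⟩ := isFlow_parallel_parts g₁ g₂ h₀ e₀ H₀
    obtain ⟨s₁, t₁, hst₁, H₁L, H₁R⟩ := isFlow_parallel_parts g₁ g₂ h₁ e₁ H₁
    obtain ⟨x, y, hxy, hx₀, hx₁, hy₀, hy₁⟩ := split_interval s₀ s₁ t₀ t₁ d
      (by omega) (by omega)
    obtain ⟨kL, hkL, hkLfix⟩ := ih₁ s₀ s₁ x _ _ H₀L H₁L
      (fun a ha => hfix (Sum.inl a) ha) hx₀ hx₁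
    obtain ⟨kR, hkR, hkRfix⟩ := ih₂ t₀ t₁ y _ _ H₀R H₁R
      (fun a ha => hfix (Sum.inr a) ha) hy₀ hy₁
    refine ⟨Sum.elim kL kR, ?_, ?_⟩
    · have := isFlow_parallel_mk g₁ g₂ x y kL kR hkL hkR
      rwa [hxy] at this
    · rintro (a | a) ha
      · exact hkLfix a ha
      · exact hkRfix a ha

/-- Key lemma: given a feasible flow `f` of demand `D` and any feasible flow `h` of
demand `d ≤ D` agreeing with `f` on the fixed arcs, there is a feasible flow of
demand `d` that is pointwise at most `f` and still agrees with `f` on fixed arcs. -/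
lemma exists_subflow : ∀ (g : SPD) (D d : ℤ) (f h : g.Arcs → ℤ),
    g.IsFlow (g.bal D) f → g.IsFlow (g.bal d) h →
    (∀ a, g.fixedArc a = true → h a = f a) → d ≤ D →
    ∃ k, g.IsFlow (g.bal d) k ∧ (∀ a, k a ≤ f a) ∧
      ∀ a, g.fixedArc a = true → k a = f a := by
  intro g
  induction g with
  | arc b u c =>
    intro D d f h Hf Hh hfix hdD
    rw [isFlow_arc_iff] at Hf Hh
    obtain ⟨⟨hf0, hf1⟩, hf2⟩ := Hf
    obtain ⟨⟨hh0, hh1⟩, hh2⟩ := Hh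
    cases b with
    | true =>
      have heq : h () = f () := hfix () rfl
      refine ⟨f, ?_, fun a => le_refl _, fun a _ => rfl⟩
      rw [isFlow_arc_iff]
      exact ⟨⟨hf0, hf1⟩, by omega⟩
    | false =>
      refine ⟨fun _ => d, ?_, ?_, fun a ha => by simp [fixedArc] at ha⟩
      · rw [isFlow_arc_iff]
        exact ⟨⟨by omega, by omega⟩, rfl⟩
      · intro a
        have hfa : f a = f () := rfl
        have : ((fun _ => d) a : ℤ) = d := rfl
        omega
  | series g₁ g₂ ih₁ ih₂ =>
    intro D d f h Hf Hh hfix hdD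
    rw [isFlow_series_iff] at Hf Hh
    obtain ⟨kL, hkL, hkLle, hkLfix⟩ := ih₁ D d _ _ Hf.1 Hh.1
      (fun a ha => hfix (Sum.inl a) ha) hdD
    obtain ⟨kR, hkR, hkRle, hkRfix⟩ := ih₂ D d _ _ Hf.2 Hh.2
      (fun a ha => hfix (Sum.inr a) ha) hdD
    refine ⟨Sum.elim kL kR, ?_, ?_, ?_⟩
    · rw [isFlow_series_iff]
      exact ⟨hkL, hkR⟩
    · rintro (a | a)
      · exact hkLle a
      · exact hkRle a
    · rintro (a | a) ha
      · exact hkLfix a ha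
      · exact hkRfix a ha
  | parallel g₁ g₂ ih₁ ih₂ =>
    intro D d f h Hf Hh hfix hdD
    obtain ⟨sf, tf, hstf, HfL, HfR⟩ := isFlow_parallel_parts g₁ g₂ f D Hf
    obtain ⟨s, t, hst, HhL, HhR⟩ := isFlow_parallel_parts g₁ g₂ h d Hh
    by_cases hc₁ : s ≤ sf
    · by_cases hc₂ : t ≤ tf
      · -- recurse directly on both sides
        obtain ⟨kL, hkL, hkLle, hkLfix⟩ := ih₁ sf s _ _ HfL HhL
          (fun a ha => hfix (Sum.inl a) ha) hc₁
        obtain ⟨kR, hkR, hkRle, hkRfix⟩ := ih₂ tf t _ _ HfR HhR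
          (fun a ha => hfix (Sum.inr a) ha) hc₂
        refine ⟨Sum.elim kL kR, ?_, ?_, ?_⟩
        · have := isFlow_parallel_mk g₁ g₂ s t kL kR hkL hkR
          rwa [hst] at this
        · rintro (a | a)
          · exact hkLle a
          · exact hkRle a
        · rintro (a | a) ha
          · exact hkLfix a ha
          · exact hkRfix a ha
      · -- t > tf : take f on the right, shift demand on the left
        push_neg at hc₂
        -- left demand becomes d - tf, with s < d - tf ≤ sf
        obtain ⟨h', hh', hh'fix⟩ := exists_flow_between g₁ s sf (d - tf) _ _ HhL HfL
          (fun a ha => hfix (Sum.inl a) ha) (by omega) (by omega)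
        obtain ⟨kL, hkL, hkLle, hkLfix⟩ := ih₁ sf (d - tf) _ h' HfL hh'
          (fun a ha => (hh'fix a ha).trans (hfix (Sum.inl a) ha)) (by omega)
        refine ⟨Sum.elim kL (fun a => f (Sum.inr a)), ?_, ?_, ?_⟩
        · have := isFlow_parallel_mk g₁ g₂ (d - tf) tf kL _ hkL HfR
          rwa [show d - tf + tf = d by ring] at this
        · rintro (a | a)
          · exact hkLle a
          · exact le_refl _
        · rintro (a | a) ha
          · exact hkLfix a ha
          · rfl
    · -- s > sf : take f on the left, shift demand on the right
      push_neg at hc₁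
      obtain ⟨h', hh', hh'fix⟩ := exists_flow_between g₂ t tf (d - sf) _ _ HhR HfR
        (fun a ha => hfix (Sum.inr a) ha) (by omega) (by omega)
      obtain ⟨kR, hkR, hkRle, hkRfix⟩ := ih₂ tf (d - sf) _ h' HfR hh'
        (fun a ha => (hh'fix a ha).trans (hfix (Sum.inr a) ha)) (by omega)
      refine ⟨Sum.elim (fun a => f (Sum.inl a)) kR, ?_, ?_, ?_⟩
      · have := isFlow_parallel_mk g₁ g₂ sf (d - sf) _ kR HfL hkR
        rwa [show sf + (d - sf) = d by ring] at this
      · rintro (a | a)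
        · exact le_refl _
        · exact hkRle a
      · rintro (a | a) ha
        · rfl
        · exact hkRfix a ha

/-- An optimal robust flow exists whenever a robust flow exists. -/
lemma exists_optimal (g : SPD) (d₁ d₂ : ℤ)
    (hfeas : ∃ f₁ f₂, g.IsRobust2 d₁ d₂ f₁ f₂) :
    ∃ f₁ f₂, g.Optimal d₁ d₂ f₁ f₂ := by
  classical
  set box : Finset (g.Arcs → ℤ) := Fintype.piFinset (fun a => Finset.Icc 0 (g.cap a)) with hbox
  set S : Finset ((g.Arcs → ℤ) × (g.Arcs → ℤ)) :=
    (box ×ˢ box).filter (fun p => g.IsRobust2 d₁ d₂ p.1 p.2) with hS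
  have hmem : ∀ f₁ f₂, g.IsRobust2 d₁ d₂ f₁ f₂ → (f₁, f₂) ∈ S := by
    intro f₁ f₂ hr
    rw [hS, Finset.mem_filter, Finset.mem_product]
    refine ⟨⟨?_, ?_⟩, hr⟩
    · rw [hbox, Fintype.mem_piFinset]
      intro a
      rw [Finset.mem_Icc]
      exact hr.1.1 a
    · rw [hbox, Fintype.mem_piFinset]
      intro a
      rw [Finset.mem_Icc]
      exact hr.2.1.1 a
  obtain ⟨f₁, f₂, hr⟩ := hfeas
  obtain ⟨p, hpS, hmin⟩ := S.exists_min_image (fun p => g.rcost p.1 p.2)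
    ⟨(f₁, f₂), hmem _ _ hr⟩
  have hpR : g.IsRobust2 d₁ d₂ p.1 p.2 := (Finset.mem_filter.1 hpS).2
  exact ⟨p.1, p.2, hpR, fun h₁ h₂ hh => hmin (h₁, h₂) (hmem _ _ hh)⟩

end SPD


/-- Lemma 11 of the paper: for a two-scenario instance on an SP digraph
with unique source at the origin, unique sink at the target, and demands `d₁ ≤ d₂`, if
a robust flow exists then there exists an optimal integral robust flow whose cost is
attained by the larger-demand scenario: `c(f) = max {c(f₁), c(f₂)} = c(f₂)`. -/
theorem cost_attained_in_second_scenario (g : SPD) (hg : g.nonnegData)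
    (d₁ d₂ : ℤ) (hd₀ : 0 ≤ d₁) (hd : d₁ ≤ d₂)
    (hfeas : ∃ f₁ f₂, g.IsRobust2 d₁ d₂ f₁ f₂) :
    ∃ f₁ f₂, g.Optimal d₁ d₂ f₁ f₂ ∧ g.rcost f₁ f₂ = g.flowCost f₂ := by
  obtain ⟨f₁, f₂, hopt⟩ := SPD.exists_optimal g d₁ d₂ hfeas
  obtain ⟨⟨hF₁, hF₂, hfix⟩, hmin⟩ := hopt
  obtain ⟨k, hk, hkle, hkfix⟩ := SPD.exists_subflow g d₂ d₁ f₂ f₁ hF₂ hF₁ hfix hd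
  have hrob : g.IsRobust2 d₁ d₂ k f₂ := ⟨hk, hF₂, fun a ha => hkfix a ha⟩
  have hcost : g.flowCost k ≤ g.flowCost f₂ := by
    apply Finset.sum_le_sum
    intro a _
    exact mul_le_mul_of_nonneg_left (hkle a) (hg a).2
  have hmax : g.rcost k f₂ = g.flowCost f₂ := max_eq_right hcost
  refine ⟨k, f₂, ⟨hrob, ?_⟩, hmax⟩
  intro h₁ h₂ hh
  calc g.rcost k f₂ = g.flowCost f₂ := hmax
    _ ≤ g.rcost f₁ f₂ := le_max_right _ _
    _ ≤ g.rcost h₁ h₂ := hmin h₁ h₂ hh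
end
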